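/- Assume additionally that P(w > 0) = 1. Then 1 / (e^{-2Bn} Σ_{k=1}^{n} X_{k-1}² − n^{-1} (e^{-Bn} Σ_{k=1}^{n} X_{k-1})²) converges P-almost surely to (e^{2B} − 1)/w² as n → ∞. -/

import Mathlib

open MeasureTheory Filter Real


lemma geom_weighted_tendsto {c L : ℝ} (hc : 0 < c) {b : ℕ → ℝ}
    (hb : Tendsto b atTop (nhds L)) :
    Tendsto (fun n : ℕ => Real.exp (-c * n) * ∑ k ∈ Finset.range n, Real.exp (c * k) * b k)
      atTop (nhds (L / (Real.exp c - 1))) := by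
  have h1 : (1 : ℝ) < Real.exp c := by
    rw [Real.one_lt_exp_iff]; exact hc
  have hne : Real.exp c - 1 ≠ 0 := by linarith
  -- geometric sum
  have hG : ∀ n : ℕ, (∑ k ∈ Finset.range n, Real.exp (c * k)) =
      (Real.exp c ^ n - 1) / (Real.exp c - 1) := by
    intro n
    rw [← geom_sum_eq (by linarith : Real.exp c ≠ 1)]
    exact Finset.sum_congr rfl fun k _ => by rw [← Real.exp_nat_mul, mul_comm]
  have hexp : ∀ n : ℕ, Real.exp (-c * n) = (Real.exp c ^ n)⁻¹ := fun n => by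
    rw [← Real.exp_nat_mul, ← Real.exp_neg]; ring_nf
  have hpow : Tendsto (fun n : ℕ => Real.exp c ^ n) atTop atTop :=
    tendsto_pow_atTop_atTop_of_one_lt h1
  -- e^{-cn} * G n → 1/(e^c - 1)
  have hA : Tendsto (fun n : ℕ => Real.exp (-c * n) * ∑ k ∈ Finset.range n, Real.exp (c * k))
      atTop (nhds (1 / (Real.exp c - 1))) := by
    have h0 : Tendsto (fun n : ℕ => (Real.exp c ^ n)⁻¹) atTop (nhds 0) :=
      hpow.inv_tendsto_atTop
    have : Tendsto (fun n : ℕ => (1 - (Real.exp c ^ n)⁻¹) / (Real.exp c - 1)) atTop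
        (nhds ((1 - 0) / (Real.exp c - 1))) :=
      (tendsto_const_nhds.sub h0).div_const _
    rw [sub_zero] at this
    refine this.congr fun n => ?_
    rw [hG, hexp]
    have hp : Real.exp c ^ n ≠ 0 := by positivity
    field_simp
  -- little-o part
  have hlo : (fun k : ℕ => Real.exp (c * k) * (b k - L)) =o[atTop]
      (fun k : ℕ => Real.exp (c * k)) := by
    have := (Asymptotics.isBigO_refl (fun k : ℕ => Real.exp (c * k)) atTop).mul_isLittleO
      ((Asymptotics.isLittleO_one_iff ℝ).2 (tendsto_sub_nhds_zero_iff.2 hb))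
    simpa using this
  have hgt : Tendsto (fun n : ℕ => ∑ i ∈ Finset.range n, Real.exp (c * i)) atTop atTop := by
    have : Tendsto (fun n : ℕ => (Real.exp c ^ n - 1) / (Real.exp c - 1)) atTop atTop :=
      (hpow.atTop_add tendsto_const_nhds).atTop_div_const (by linarith)
    exact this.congr fun n => by rw [hG n]
  have hsum : (fun n : ℕ => ∑ i ∈ Finset.range n, Real.exp (c * i) * (b i - L)) =o[atTop]
      (fun n : ℕ => ∑ i ∈ Finset.range n, Real.exp (c * i)) :=
    hlo.sum_range (fun i => (Real.exp_pos _).le) hgt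
  have hdiv : Tendsto (fun n : ℕ =>
      (∑ i ∈ Finset.range n, Real.exp (c * i) * (b i - L)) /
      (∑ i ∈ Finset.range n, Real.exp (c * i))) atTop (nhds 0) := by
    refine hsum.tendsto_div_nhds_zero
  have hzero : Tendsto (fun n : ℕ =>
      Real.exp (-c * n) * ∑ i ∈ Finset.range n, Real.exp (c * i) * (b i - L)) atTop (nhds 0) := by
    have := hdiv.mul hA
    rw [zero_mul] at this
    apply this.congr'
    filter_upwards [eventually_ge_atTop 1] with n hn
    have hGpos : 0 < ∑ i ∈ Finset.range n, Real.exp (c * i) :=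
      Finset.sum_pos (fun i _ => Real.exp_pos _) (Finset.nonempty_range_iff.2 (by omega))
    field_simp
  have := hzero.add (hA.const_mul L)
  rw [zero_add] at this
  have heq : L * (1 / (Real.exp c - 1)) = L / (Real.exp c - 1) := by ring
  rw [heq] at this
  refine this.congr fun n => ?_
  simp only [Finset.mul_sum, ← Finset.sum_add_distrib]
  exact Finset.sum_congr rfl fun k _ => by ring

theorem inverse_normalized_empirical_variance_tendsto
    {Ω : Type*} [MeasurableSpace Ω] (P : Measure Ω) [IsProbabilityMeasure P]
    (B : ℝ) (hB : 0 < B)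
    (X : ℕ → Ω → ℝ) (hXmeas : ∀ n, Measurable (X n)) (hXnonneg : ∀ n ω, 0 ≤ X n ω)
    (w : Ω → ℝ) (hwmeas : Measurable w)
    (hconv : ∀ᵐ ω ∂P,
      Tendsto (fun n : ℕ => Real.exp (-B * n) * X n ω) atTop (nhds (w ω)))
    (hwpos : P {ω | 0 < w ω} = 1) :
    ∀ᵐ ω ∂P,
      Tendsto (fun n : ℕ =>
          1 / (Real.exp (-(2 * B) * n) * ∑ k ∈ Finset.range n, (X k ω) ^ 2
            - (n : ℝ)⁻¹ * (Real.exp (-B * n) * ∑ k ∈ Finset.range n, X k ω) ^ 2))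
        atTop (nhds ((Real.exp (2 * B) - 1) / (w ω) ^ 2)) := by
  have hw : ∀ᵐ ω ∂P, 0 < w ω := by
    rw [ae_iff]
    have h : {ω | ¬ 0 < w ω} = {ω | 0 < w ω}ᶜ := by ext ω; simp
    rw [h, prob_compl_eq_zero_iff (measurableSet_lt measurable_const hwmeas)]
    exact hwpos
  filter_upwards [hconv, hw] with ω hc hwω
  have h2B : (0:ℝ) < 2 * B := by linarith
  have hE2 : (1:ℝ) < Real.exp (2 * B) := by rw [Real.one_lt_exp_iff]; exact h2B
  -- e^{-2Bn} Σ X_k² → w²/(e^{2B}-1)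
  have hsq : Tendsto (fun n : ℕ =>
      Real.exp (-(2*B) * n) * ∑ k ∈ Finset.range n, (X k ω) ^ 2) atTop
      (nhds (w ω ^ 2 / (Real.exp (2*B) - 1))) := by
    have := geom_weighted_tendsto h2B (hc.pow 2)
    refine this.congr fun n => ?_
    congr 1
    refine Finset.sum_congr rfl fun k _ => ?_
    rw [mul_pow, sq (Real.exp (-B * k)), ← mul_assoc, ← mul_assoc, ← Real.exp_add,
      ← Real.exp_add]
    have harg : 2 * B * (k:ℝ) + -B * k + -B * k = 0 := by ring
    rw [harg, Real.exp_zero, one_mul]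
  -- e^{-Bn} Σ X_k → w/(e^B-1)
  have hlin : Tendsto (fun n : ℕ =>
      Real.exp (-B * n) * ∑ k ∈ Finset.range n, X k ω) atTop
      (nhds (w ω / (Real.exp B - 1))) := by
    have := geom_weighted_tendsto hB hc
    refine this.congr fun n => ?_
    congr 1
    refine Finset.sum_congr rfl fun k _ => ?_
    rw [← mul_assoc, ← Real.exp_add]
    have harg : B * (k:ℝ) + -B * k = 0 := by ring
    rw [harg, Real.exp_zero, one_mul]
  -- second term → 0
  have hzero : Tendsto (fun n : ℕ =>
      (n : ℝ)⁻¹ * (Real.exp (-B * n) * ∑ k ∈ Finset.range n, X k ω) ^ 2) atTop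
      (nhds 0) := by
    have := tendsto_inv_atTop_nhds_zero_nat.mul (hlin.pow 2)
    rwa [zero_mul] at this
  have hD := hsq.sub hzero
  rw [sub_zero] at hD
  have hne : w ω ^ 2 / (Real.exp (2*B) - 1) ≠ 0 := by
    apply div_ne_zero (by positivity) (by linarith)
  have h1 : Tendsto (fun _ : ℕ => (1:ℝ)) atTop (nhds 1) := tendsto_const_nhds
  have := h1.div hD hne
  rwa [one_div_div] at this
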